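/- arXiv:2505.22556 — 2 statements merged into one kernel-verified Lean document; each statement's English description precedes it below -/
import Mathlib

section
/- Let $T$ be a measure-preserving transformation on a probability space $(X,\mu)$. Suppose there exist a collection $\mathcal{A}$ of measurable sets such that every measurable set can be approximated in measure arbitrarily well by countable disjoint unions of sets from $\mathcal{A}$, a function $n:\mathcal{A}\to\mathbb{N}$ with $\mu(T^{n(A)}A)=1$ for all $A\in\mathcal{A}$, and a constant $\lambda>0$ such that for all $A\in\mathcal{A}$ and measurable $B\subseteq A$, $\mu(T^{n(A)}B)\le\lambda\,\mu(B)/\mu(A)$. Then $T$ is exact, i.e., for every measurable set $B$ with $\mu(B)>0$, $\lim_{n\to\infty}\mu(T^nB)=1$. -/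
open MeasureTheory Filter Topology
open scoped ENNReal symmDiff

/-- Rokhlin's Exactness Theorem. -/
theorem rokhlin_exactness {X : Type*} [MeasurableSpace X] (μ : Measure X)
    [IsProbabilityMeasure μ] (T : X → X) (hT : MeasurePreserving T μ μ)
    (hfwd : ∀ B : Set X, MeasurableSet B → ∀ k : ℕ, MeasurableSet (T^[k] '' B))
    (𝒜 : Set (Set X)) (h𝒜 : ∀ A ∈ 𝒜, MeasurableSet A)
    (happrox : ∀ B : Set X, MeasurableSet B → ∀ ε : ℝ≥0∞, 0 < ε →
      ∃ f : ℕ → Set X, (∀ i, f i ∈ 𝒜) ∧ Pairwise (Function.onFun Disjoint f) ∧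
        μ (B ∆ (⋃ i, f i)) < ε)
    (n : Set X → ℕ) (hn : ∀ A ∈ 𝒜, μ (T^[n A] '' A) = 1)
    (lam : ℝ≥0∞) (hlam_pos : 0 < lam) (hlam_top : lam ≠ ⊤)
    (hdist : ∀ A ∈ 𝒜, ∀ B : Set X, MeasurableSet B → B ⊆ A →
      μ (T^[n A] '' B) ≤ lam * μ B / μ A) :
    ∀ B : Set X, MeasurableSet B → 0 < μ B →
      Tendsto (fun k => μ (T^[k] '' B)) atTop (𝓝 1) := by
  intro B hB hBpos
  -- monotonicity of k ↦ μ (T^[k] '' B)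
  have hmono : Monotone (fun k => μ (T^[k] '' B)) := by
    apply monotone_nat_of_le_succ
    intro k
    have hS : MeasurableSet (T^[k] '' B) := hfwd B hB k
    have hS1 : MeasurableSet (T '' (T^[k] '' B)) := by
      have := hfwd (T^[k] '' B) hS 1
      simpa using this
    have h1 : T^[k+1] '' B = T '' (T^[k] '' B) := by
      rw [Function.iterate_succ']
      exact Set.image_comp T (T^[k]) B
    show μ (T^[k] '' B) ≤ μ (T^[k+1] '' B)
    rw [h1]
    calc μ (T^[k] '' B) ≤ μ (T ⁻¹' (T '' (T^[k] '' B))) :=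
          measure_mono (Set.subset_preimage_image T _)
      _ = μ (T '' (T^[k] '' B)) := hT.measure_preimage hS1.nullMeasurableSet
  -- key estimate : for every positive ε there is k with 1 ≤ μ (T^[k] '' B) + ε
  have key : ∀ ε : ℝ≥0∞, 0 < ε → ∃ k, 1 ≤ μ (T^[k] '' B) + ε := by
    intro ε hε
    set δ : ℝ≥0∞ := min (ε / lam) 1 with hδdef
    have hδpos : 0 < δ := lt_min (ENNReal.div_pos hε.ne' hlam_top) one_pos
    have hδ1 : δ ≤ 1 := min_le_right _ _
    have hld : lam * δ ≤ ε := by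
      calc lam * δ ≤ lam * (ε / lam) := by gcongr; exact min_le_left _ _
        _ ≤ ε := ENNReal.mul_div_le
    set b : ℝ≥0∞ := μ B with hbdef
    have hbtop : b ≠ ⊤ := measure_ne_top μ B
    set ε' : ℝ≥0∞ := δ * b / 4 with hε'def
    have hε'pos : 0 < ε' := ENNReal.div_pos (mul_ne_zero hδpos.ne' hBpos.ne') (by norm_num)
    obtain ⟨f, hf𝒜, hfd, hfap⟩ := happrox B hB ε' hε'pos
    have hmf : ∀ i, MeasurableSet (f i) := fun i => h𝒜 _ (hf𝒜 i)
    -- find a good index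
    have hexists : ∃ i, μ (f i) ≠ 0 ∧ μ (f i \ B) ≤ δ * μ (f i) := by
      by_contra hcon
      push_neg at hcon
      have hterm : ∀ i, δ * μ (f i) ≤ μ (f i \ B) := by
        intro i
        rcases eq_or_ne (μ (f i)) 0 with h0 | h0
        · simp [h0]
        · exact (hcon i h0).le
      set U := ⋃ i, f i with hUdef
      have hU : μ U = ∑' i, μ (f i) := measure_iUnion hfd hmf
      have hUB : μ (U \ B) = ∑' i, μ (f i \ B) := by
        rw [hUdef, Set.iUnion_diff]
        exact measure_iUnion
          (hfd.mono fun i j h => h.mono Set.diff_subset Set.diff_subset)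
          (fun i => (hmf i).diff hB)
      have h1 : δ * μ U ≤ μ (U \ B) := by
        rw [hU, hUB, ← ENNReal.tsum_mul_left]
        exact ENNReal.tsum_le_tsum hterm
      have hUBlt : μ (U \ B) < ε' := by
        refine lt_of_le_of_lt (measure_mono ?_) hfap
        rw [Set.symmDiff_def]
        exact Set.subset_union_right
      have hBUlt : μ (B \ U) < ε' := by
        refine lt_of_le_of_lt (measure_mono ?_) hfap
        rw [Set.symmDiff_def]
        exact Set.subset_union_left
      have hBU : b ≤ μ U + ε' := by
        calc b ≤ μ (U ∪ (B \ U)) := measure_mono (fun x hx => by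
              by_cases hxU : x ∈ U
              · exact Or.inl hxU
              · exact Or.inr ⟨hx, hxU⟩)
          _ ≤ μ U + μ (B \ U) := measure_union_le _ _
          _ ≤ μ U + ε' := add_le_add le_rfl hBUlt.le
      have hUb : b - ε' ≤ μ U := tsub_le_iff_right.mpr hBU
      -- ε' ≤ δ * (b - ε')
      have hε'le : ε' ≤ b / 2 := by
        calc ε' = δ * (b / 4) := by rw [hε'def, mul_div_assoc]
          _ ≤ 1 * (b / 4) := by gcongr
          _ = b / 4 := one_mul _
          _ ≤ b / 2 := by gcongr <;> norm_num
      have hε'top : ε' ≠ ⊤ :=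
        (hε'le.trans_lt (ENNReal.div_lt_top hbtop (by norm_num))).ne
      have hhalf : b / 2 ≤ b - ε' := by
        refine ENNReal.le_sub_of_add_le_right hε'top ?_
        calc b / 2 + ε' ≤ b / 2 + b / 2 := add_le_add le_rfl hε'le
          _ = b := ENNReal.add_halves b
      have hchain : ε' ≤ δ * (b - ε') := by
        calc ε' = δ * (b / 4) := by rw [hε'def, mul_div_assoc]
          _ ≤ δ * (b / 2) := by gcongr <;> norm_num
          _ ≤ δ * (b - ε') := by gcongr
      have : ε' < ε' :=
        lt_of_le_of_lt (hchain.trans ((by gcongr : δ * (b - ε') ≤ δ * μ U).trans h1)) hUBlt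
      exact lt_irrefl _ this
    obtain ⟨i, hi0, hiB⟩ := hexists
    set A := f i with hAdef
    have hA𝒜 : A ∈ 𝒜 := hf𝒜 i
    have hAm : MeasurableSet A := h𝒜 A hA𝒜
    refine ⟨n A, ?_⟩
    have himg : (1:ℝ≥0∞) = μ (T^[n A] '' A) := (hn A hA𝒜).symm
    have hsplit : T^[n A] '' A ⊆ (T^[n A] '' (A ∩ B)) ∪ (T^[n A] '' (A \ B)) := by
      rw [← Set.image_union]
      apply Set.image_mono
      intro x hx
      by_cases hxB : x ∈ B
      · exact Or.inl ⟨hx, hxB⟩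
      · exact Or.inr ⟨hx, hxB⟩
    have h2 : μ (T^[n A] '' (A ∩ B)) ≤ μ (T^[n A] '' B) :=
      measure_mono (Set.image_mono Set.inter_subset_right)
    have h3 : μ (T^[n A] '' (A \ B)) ≤ ε := by
      calc μ (T^[n A] '' (A \ B)) ≤ lam * μ (A \ B) / μ A :=
            hdist A hA𝒜 (A \ B) (hAm.diff hB) Set.diff_subset
        _ ≤ lam * (δ * μ A) / μ A := by gcongr
        _ = lam * δ * (μ A / μ A) := by rw [mul_div_assoc, mul_div_assoc, mul_assoc]
        _ ≤ lam * δ * 1 := by gcongr; exact ENNReal.div_self_le_one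
        _ = lam * δ := mul_one _
        _ ≤ ε := hld
    calc (1:ℝ≥0∞) = μ (T^[n A] '' A) := himg
      _ ≤ μ ((T^[n A] '' (A ∩ B)) ∪ (T^[n A] '' (A \ B))) := measure_mono hsplit
      _ ≤ μ (T^[n A] '' (A ∩ B)) + μ (T^[n A] '' (A \ B)) := measure_union_le _ _
      _ ≤ μ (T^[n A] '' B) + ε := by gcongr
  -- conclude
  have hsup : (⨆ k, μ (T^[k] '' B)) = 1 := by
    apply le_antisymm
    · exact iSup_le fun k => prob_le_one
    · refine ENNReal.le_of_forall_pos_le_add fun r hr _ => ?_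
      obtain ⟨k, hk⟩ := key r (by exact_mod_cast hr)
      exact hk.trans (by gcongr; exact le_iSup (fun k => μ (T^[k] '' B)) k)
  have := tendsto_atTop_iSup hmono
  rwa [hsup] at this
end

section
/- Let $Q$ be the quadratic form of signature $(p,q)$ on $\mathbb{R}^{p+q}$ and $\iota(x)=x/Q(x)$. If $x,y$ satisfy $0<|Q(x)|<1$, $0<|Q(y)|<1$, and $Q(x-y)\ne 0$, then $|Q(\iota(x)-\iota(y))|>|Q(x-y)|$. -/
open scoped BigOperators

/-- The quadratic form of signature `(p,q)` on `ℝ^p × ℝ^q`. -/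
noncomputable def Qpq (p q : ℕ) (x : (Fin p → ℝ) × (Fin q → ℝ)) : ℝ :=
  (∑ i, (x.1 i) ^ 2) - ∑ j, (x.2 j) ^ 2

/-- The inversion `ι(x) = x / Q(x)`. -/
noncomputable def iotaPQ (p q : ℕ) (x : (Fin p → ℝ) × (Fin q → ℝ)) :
    (Fin p → ℝ) × (Fin q → ℝ) :=
  (Qpq p q x)⁻¹ • x

/-- Auxiliary bilinear form. -/
noncomputable def Bpq (p q : ℕ) (x y : (Fin p → ℝ) × (Fin q → ℝ)) : ℝ :=
  (∑ i, (x.1 i) * (y.1 i)) - ∑ j, (x.2 j) * (y.2 j)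

lemma Qpq_sub_eq (p q : ℕ) (x y : (Fin p → ℝ) × (Fin q → ℝ)) :
    Qpq p q (x - y) = Qpq p q x + Qpq p q y - 2 * Bpq p q x y := by
  have hs : ∀ a b : ℝ, (a - b) ^ 2 = a ^ 2 - 2 * (a * b) + b ^ 2 := by intros; ring
  simp only [Qpq, Bpq, Prod.fst_sub, Prod.snd_sub, Pi.sub_apply, hs,
    Finset.sum_add_distrib, Finset.sum_sub_distrib, ← Finset.mul_sum]
  ring

lemma Bpq_smul_left (p q : ℕ) (c : ℝ) (x y : (Fin p → ℝ) × (Fin q → ℝ)) :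
    Bpq p q (c • x) y = c * Bpq p q x y := by
  simp only [Bpq, Prod.smul_fst, Prod.smul_snd, Pi.smul_apply, smul_eq_mul,
    mul_assoc, ← Finset.mul_sum]
  ring

lemma Bpq_smul_right (p q : ℕ) (c : ℝ) (x y : (Fin p → ℝ) × (Fin q → ℝ)) :
    Bpq p q x (c • y) = c * Bpq p q x y := by
  have hc : ∀ a b : ℝ, a * (c * b) = c * (a * b) := by intros; ring
  simp only [Bpq, Prod.smul_fst, Prod.smul_snd, Pi.smul_apply, smul_eq_mul,
    hc, ← Finset.mul_sum]
  ring

lemma Qpq_smul (p q : ℕ) (c : ℝ) (x : (Fin p → ℝ) × (Fin q → ℝ)) :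
    Qpq p q (c • x) = c ^ 2 * Qpq p q x := by
  simp only [Qpq, Prod.smul_fst, Prod.smul_snd, Pi.smul_apply, smul_eq_mul,
    mul_pow, ← Finset.mul_sum]
  ring

/-- `ι` is expanding relative to `|Q|` on the region `0 < |Q| < 1`. -/
theorem abs_Q_iota_sub_gt (p q : ℕ) (x y : (Fin p → ℝ) × (Fin q → ℝ))
    (hx : 0 < |Qpq p q x|) (hx1 : |Qpq p q x| < 1)
    (hy : 0 < |Qpq p q y|) (hy1 : |Qpq p q y| < 1)
    (hxy : Qpq p q (x - y) ≠ 0) :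
    |Qpq p q (iotaPQ p q x - iotaPQ p q y)| > |Qpq p q (x - y)| := by
  set a := Qpq p q x with ha
  set b := Qpq p q y with hb
  have ha0 : a ≠ 0 := fun h => by simp [h] at hx
  have hb0 : b ≠ 0 := fun h => by simp [h] at hy
  have key : Qpq p q (iotaPQ p q x - iotaPQ p q y) = Qpq p q (x - y) / (a * b) := by
    rw [iotaPQ, iotaPQ, Qpq_sub_eq, Qpq_smul, Qpq_smul, Bpq_smul_left, Bpq_smul_right,
      Qpq_sub_eq, ← ha, ← hb]
    field_simp
    ring
  rw [key, abs_div, abs_mul, gt_iff_lt, div_eq_mul_inv]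
  have hQ : 0 < |Qpq p q (x - y)| := abs_pos.mpr hxy
  have hab : |a| * |b| < 1 := by
    calc |a| * |b| < 1 * 1 := by
          exact mul_lt_mul' hx1.le hy1 (abs_nonneg _) one_pos
      _ = 1 := one_mul 1
  have habpos : 0 < |a| * |b| := mul_pos hx hy
  nlinarith [mul_pos hQ habpos, (one_lt_inv₀ habpos).mpr hab]
end
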